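/- Let s₁ > 0 and s < s₁ − 1/2 be real numbers. Then there exists a constant C > 0 such that for every function a : ℤ³ → [0, ∞): ∑_{n ∈ ℤ³} ⟨n⟩^{2s} ∑_{n₁ ∈ ℤ³ : (1/2)|n − n₁| ≤ |n₁| ≤ 2|n − n₁|} a(n₁) ⟨n − n₁⟩^{−2} ≤ C ∑_{m ∈ ℤ³} ⟨m⟩^{2s₁} a(m), where both sides may be infinite. -/

import Mathlib

/-- Japanese bracket of a lattice point `n ∈ ℤ³`: `⟨n⟩ = (1 + |n|²)^{1/2}`. -/
noncomputable def jb (n : Fin 3 → ℤ) : ℝ :=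
  Real.sqrt (1 + ∑ i, ((n i : ℝ)) ^ 2)

/-- Euclidean norm of a lattice point `n ∈ ℤ³`. -/
noncomputable def enorm' (n : Fin 3 → ℤ) : ℝ :=
  Real.sqrt (∑ i, ((n i : ℝ)) ^ 2)


lemma sq_sum_nonneg (n : Fin 3 → ℤ) : 0 ≤ ∑ i, ((n i : ℝ)) ^ 2 :=
  Finset.sum_nonneg fun i _ => sq_nonneg _

lemma enorm'_nonneg (n : Fin 3 → ℤ) : 0 ≤ enorm' n := Real.sqrt_nonneg _

lemma enorm'_sq (n : Fin 3 → ℤ) : enorm' n ^ 2 = ∑ i, ((n i : ℝ)) ^ 2 :=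
  Real.sq_sqrt (sq_sum_nonneg n)

lemma jb_eq (n : Fin 3 → ℤ) : jb n = Real.sqrt (1 + enorm' n ^ 2) := by
  rw [enorm'_sq]; rfl

lemma jb_pos (n : Fin 3 → ℤ) : 0 < jb n := by
  apply Real.sqrt_pos.2; have := sq_sum_nonneg n; linarith

lemma one_le_jb (n : Fin 3 → ℤ) : 1 ≤ jb n := by
  rw [show (1:ℝ) = Real.sqrt 1 by simp [Real.sqrt_one]]
  apply Real.sqrt_le_sqrt; have := sq_sum_nonneg n; linarith

lemma jb_le_of_enorm {a b : Fin 3 → ℤ} {c : ℝ} (hc : 1 ≤ c) (h : enorm' a ≤ c * enorm' b) :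
    jb a ≤ c * jb b := by
  rw [jb_eq, jb_eq]
  have hc0 : 0 ≤ c := by linarith
  have h2 : enorm' a ^ 2 ≤ c ^ 2 * enorm' b ^ 2 := by
    have := mul_self_le_mul_self (enorm'_nonneg a) h
    nlinarith [enorm'_nonneg a, enorm'_nonneg b]
  have hc2 : 1 ≤ c ^ 2 := by nlinarith
  calc Real.sqrt (1 + enorm' a ^ 2) ≤ Real.sqrt (c ^ 2 * (1 + enorm' b ^ 2)) := by
        apply Real.sqrt_le_sqrt; nlinarith [sq_nonneg (enorm' b)]
    _ = c * Real.sqrt (1 + enorm' b ^ 2) := by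
        rw [Real.sqrt_mul (by positivity), Real.sqrt_sq hc0]

lemma enorm'_triangle (x y : Fin 3 → ℤ) : enorm' (x + y) ≤ enorm' x + enorm' y := by
  have key : ∀ z : Fin 3 → ℤ,
      enorm' z = ‖(WithLp.equiv 2 (Fin 3 → ℝ)).symm (fun i => ((z i : ℝ)))‖ := by
    intro z
    rw [EuclideanSpace.norm_eq]
    unfold enorm'
    congr 1
    apply Finset.sum_congr rfl
    intro i _
    rw [WithLp.equiv_symm_apply, PiLp.toLp_apply, Real.norm_eq_abs, sq_abs]
  rw [key, key, key]
  have : (WithLp.equiv 2 (Fin 3 → ℝ)).symm (fun i => (((x+y) i : ℤ) : ℝ))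
      = (WithLp.equiv 2 (Fin 3 → ℝ)).symm (fun i => ((x i : ℝ)))
        + (WithLp.equiv 2 (Fin 3 → ℝ)).symm (fun i => ((y i : ℝ))) := by
    ext i
    simp [WithLp.equiv_symm_apply, PiLp.toLp_apply, PiLp.add_apply, Pi.add_apply]
  rw [this]
  exact norm_add_le _ _

lemma coord_le (n : Fin 3 → ℤ) (i : Fin 3) :
    1 + |(n i : ℝ)| ≤ Real.sqrt 2 * jb n := by
  have hx : ((n i : ℝ)) ^ 2 ≤ ∑ j, ((n j : ℝ)) ^ 2 :=
    Finset.single_le_sum (f := fun j => ((n j : ℝ))^2) (fun j _ => sq_nonneg _) (Finset.mem_univ i)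
  have h1 : (1 + |(n i : ℝ)|) ^ 2 ≤ 2 * (1 + ∑ j, ((n j : ℝ)) ^ 2) := by
    have := sq_abs ((n i : ℝ))
    nlinarith [abs_nonneg ((n i : ℝ)), sq_nonneg (1 - |(n i : ℝ)|)]
  calc 1 + |(n i : ℝ)| = Real.sqrt ((1 + |(n i : ℝ)|) ^ 2) := by
        rw [Real.sqrt_sq (by positivity)]
    _ ≤ Real.sqrt (2 * (1 + ∑ j, ((n j : ℝ)) ^ 2)) := Real.sqrt_le_sqrt h1
    _ = Real.sqrt 2 * jb n := by rw [Real.sqrt_mul (by norm_num)]; rfl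

lemma jb_prod_bound {p : ℝ} (hp : 0 < p) (n : Fin 3 → ℤ) :
    jb n ^ (-p) ≤ (Real.sqrt 2) ^ p *
      ((1 + |(n 0 : ℝ)|) ^ (-(p/3)) * ((1 + |(n 1 : ℝ)|) ^ (-(p/3)) * (1 + |(n 2 : ℝ)|) ^ (-(p/3)))) := by
  set q := p / 3 with hq
  have hq0 : 0 < q := by positivity
  have hprod : (1 + |(n 0 : ℝ)|) * ((1 + |(n 1 : ℝ)|) * (1 + |(n 2 : ℝ)|))
      ≤ (Real.sqrt 2 * jb n) ^ (3 : ℕ) := by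
    have h0 := coord_le n 0
    have h1 := coord_le n 1
    have h2 := coord_le n 2
    have hpos : ∀ i : Fin 3, (0:ℝ) < 1 + |(n i : ℝ)| := fun i => by positivity
    calc (1 + |(n 0 : ℝ)|) * ((1 + |(n 1 : ℝ)|) * (1 + |(n 2 : ℝ)|))
        ≤ (Real.sqrt 2 * jb n) * ((Real.sqrt 2 * jb n) * (Real.sqrt 2 * jb n)) := by
          have hjn : (0:ℝ) ≤ Real.sqrt 2 * jb n := mul_nonneg (Real.sqrt_nonneg 2) (jb_pos n).le
          apply mul_le_mul h0 _ (by positivity) hjn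
          apply mul_le_mul h1 h2 (le_of_lt (hpos 2)) hjn
      _ = (Real.sqrt 2 * jb n) ^ (3:ℕ) := by ring
  have hb : (0:ℝ) < (1 + |(n 0 : ℝ)|) * ((1 + |(n 1 : ℝ)|) * (1 + |(n 2 : ℝ)|)) := by positivity
  have step : ((Real.sqrt 2 * jb n) ^ (3:ℕ)) ^ (-q)
      ≤ ((1 + |(n 0 : ℝ)|) * ((1 + |(n 1 : ℝ)|) * (1 + |(n 2 : ℝ)|))) ^ (-q) :=
    Real.rpow_le_rpow_of_nonpos hb hprod (by linarith)
  have lhs_eq : ((Real.sqrt 2 * jb n) ^ (3:ℕ)) ^ (-q)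
      = (Real.sqrt 2) ^ (-p) * jb n ^ (-p) := by
    have hmn : (0:ℝ) ≤ Real.sqrt 2 * jb n := mul_nonneg (Real.sqrt_nonneg 2) (jb_pos n).le
    rw [← Real.rpow_natCast (Real.sqrt 2 * jb n) 3, ← Real.rpow_mul hmn,
      Real.mul_rpow (Real.sqrt_nonneg 2) (jb_pos n).le]
    have h3 : ((3:ℕ):ℝ) * (-q) = -p := by push_cast; rw [hq]; ring
    rw [h3]
  have rhs_eq : ((1 + |(n 0 : ℝ)|) * ((1 + |(n 1 : ℝ)|) * (1 + |(n 2 : ℝ)|))) ^ (-q)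
      = (1 + |(n 0 : ℝ)|) ^ (-q) * ((1 + |(n 1 : ℝ)|) ^ (-q) * (1 + |(n 2 : ℝ)|) ^ (-q)) := by
    rw [Real.mul_rpow (by positivity) (by positivity), Real.mul_rpow (by positivity) (by positivity)]
  rw [lhs_eq, rhs_eq] at step
  have hsp : (0:ℝ) < (Real.sqrt 2) ^ p := Real.rpow_pos_of_pos (by positivity) _
  have := mul_le_mul_of_nonneg_left step hsp.le
  rw [← mul_assoc, ← Real.rpow_add (by positivity : (0:ℝ) < Real.sqrt 2)] at this
  simpa using this

lemma int_sum_finite {q : ℝ} (hq : 1 < q) :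
    ∑' k : ℤ, ENNReal.ofReal ((1 + |(k : ℝ)|) ^ (-q)) < ⊤ := by
  set F : ℤ → ℝ := fun k => (1 + |(k : ℝ)|) ^ (-q) with hF
  have hnonneg : ∀ k, 0 ≤ F k := fun k => Real.rpow_nonneg (by positivity) _
  have hnat : Summable fun n : ℕ => ((n : ℝ) + 1) ^ (-q) := by
    have h1 : Summable fun n : ℕ => ((n : ℝ)) ^ (-q) :=
      Real.summable_nat_rpow.2 (by linarith)
    have h2 := h1.comp_injective (add_right_injective 1)
    refine h2.congr fun n => ?_
    simp [Function.comp]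
    push_cast
    rw [add_comm]
  have hsum : Summable F := by
    apply Summable.of_nat_of_neg
    · refine hnat.congr fun n => ?_ ; simp [hF, abs_of_nonneg, add_comm]
    · refine hnat.congr fun n => ?_ ; simp [hF, abs_of_nonneg, add_comm]
  rw [← ENNReal.ofReal_tsum_of_nonneg hnonneg hsum]
  exact ENNReal.ofReal_lt_top

def e3 : (Fin 3 → ℤ) ≃ ℤ × ℤ × ℤ where
  toFun n := (n 0, n 1, n 2)
  invFun t := ![t.1, t.2.1, t.2.2]
  left_inv n := by funext i; fin_cases i <;> rfl
  right_inv t := rfl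

lemma S_finite {p : ℝ} (hp : 3 < p) :
    ∑' n : Fin 3 → ℤ, ENNReal.ofReal (jb n ^ (-p)) < ⊤ := by
  set q := p / 3 with hq
  have hq1 : 1 < q := by rw [hq]; linarith
  set h : ℤ → ENNReal := fun k => ENNReal.ofReal ((1 + |(k : ℝ)|) ^ (-q)) with hh
  have hpt : ∀ n : Fin 3 → ℤ, ENNReal.ofReal (jb n ^ (-p))
      ≤ ENNReal.ofReal ((Real.sqrt 2) ^ p) * (h (n 0) * (h (n 1) * h (n 2))) := by
    intro n
    have := jb_prod_bound (by linarith : (0:ℝ) < p) n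
    calc ENNReal.ofReal (jb n ^ (-p))
        ≤ ENNReal.ofReal ((Real.sqrt 2) ^ p *
          ((1 + |(n 0 : ℝ)|) ^ (-q) * ((1 + |(n 1 : ℝ)|) ^ (-q) * (1 + |(n 2 : ℝ)|) ^ (-q)))) :=
          ENNReal.ofReal_le_ofReal this
      _ = ENNReal.ofReal ((Real.sqrt 2) ^ p) * (h (n 0) * (h (n 1) * h (n 2))) := by
          rw [ENNReal.ofReal_mul (by positivity), ENNReal.ofReal_mul (by positivity),
            ENNReal.ofReal_mul (by positivity)]
  have hsum : ∑' n : Fin 3 → ℤ, (h (n 0) * (h (n 1) * h (n 2)))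
      = (∑' k : ℤ, h k) * ((∑' k : ℤ, h k) * (∑' k : ℤ, h k)) := by
    rw [← Equiv.tsum_eq e3.symm (fun n : Fin 3 → ℤ => h (n 0) * (h (n 1) * h (n 2)))]
    have : ∀ t : ℤ × ℤ × ℤ, h (e3.symm t 0) * (h (e3.symm t 1) * h (e3.symm t 2))
        = h t.1 * (h t.2.1 * h t.2.2) := fun t => rfl
    simp_rw [this]
    rw [ENNReal.tsum_prod']
    simp_rw [ENNReal.tsum_mul_left]
    rw [ENNReal.tsum_mul_right]
    congr 1
    rw [ENNReal.tsum_prod']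
    rw [tsum_congr (fun a : ℤ => (ENNReal.tsum_mul_left : ∑' b : ℤ, h a * h b = _)),
      ENNReal.tsum_mul_right]
  have hfin : (∑' k : ℤ, h k) < ⊤ := int_sum_finite hq1
  calc ∑' n : Fin 3 → ℤ, ENNReal.ofReal (jb n ^ (-p))
      ≤ ∑' n : Fin 3 → ℤ, ENNReal.ofReal ((Real.sqrt 2) ^ p) * (h (n 0) * (h (n 1) * h (n 2))) :=
        ENNReal.tsum_le_tsum hpt
    _ = ENNReal.ofReal ((Real.sqrt 2) ^ p) * ((∑' k : ℤ, h k) * ((∑' k : ℤ, h k) * (∑' k : ℤ, h k))) := by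
        rw [ENNReal.tsum_mul_left, hsum]
    _ < ⊤ := by
        apply ENNReal.mul_lt_top ENNReal.ofReal_lt_top
        exact ENNReal.mul_lt_top hfin (ENNReal.mul_lt_top hfin hfin)

lemma pointwise_bound {s₁ s : ℝ} (hs₁ : 0 < s₁) (hs : s < s₁ - 1 / 2)
    {n n₁ : Fin 3 → ℤ} (h1 : enorm' (n - n₁) ≤ 2 * enorm' n₁)
    (h2 : enorm' n₁ ≤ 2 * enorm' (n - n₁)) :
    jb n ^ (2 * s) * jb (n - n₁) ^ (-2 : ℝ) ≤
      ((3:ℝ) ^ (2 * s₁ + 2) * 4) * jb n ^ (-(2 * s₁ + 2 - 2 * s)) * jb n₁ ^ (2 * s₁) := by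
  set n₂ := n - n₁ with hn₂
  have hjn : jb n ≤ 3 * jb n₁ := by
    apply jb_le_of_enorm (by norm_num)
    have htri : enorm' n ≤ enorm' n₁ + enorm' n₂ := by
      have : n₁ + n₂ = n := by rw [hn₂]; ring
      calc enorm' n = enorm' (n₁ + n₂) := by rw [this]
        _ ≤ enorm' n₁ + enorm' n₂ := enorm'_triangle _ _
    linarith
  have hj12 : jb n₁ ≤ 2 * jb n₂ := jb_le_of_enorm (by norm_num) h2
  have hA : jb n ^ (2 * s₁ + 2) ≤ ((3:ℝ) ^ (2 * s₁ + 2) * 4) * jb n₁ ^ (2 * s₁) * jb n₂ ^ (2:ℝ) := by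
    have e0 : (0:ℝ) ≤ 2 * s₁ + 2 := by linarith
    calc jb n ^ (2 * s₁ + 2) ≤ (3 * jb n₁) ^ (2 * s₁ + 2) :=
          Real.rpow_le_rpow (jb_pos n).le hjn e0
      _ = (3:ℝ) ^ (2 * s₁ + 2) * jb n₁ ^ (2 * s₁ + 2) :=
          Real.mul_rpow (by norm_num) (jb_pos n₁).le
      _ = (3:ℝ) ^ (2 * s₁ + 2) * (jb n₁ ^ (2 * s₁) * jb n₁ ^ (2:ℝ)) := by
          rw [← Real.rpow_add (jb_pos n₁)]
      _ ≤ (3:ℝ) ^ (2 * s₁ + 2) * (jb n₁ ^ (2 * s₁) * (2 * jb n₂) ^ (2:ℝ)) := by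
          apply mul_le_mul_of_nonneg_left _ (Real.rpow_nonneg (by norm_num) _)
          apply mul_le_mul_of_nonneg_left _ (Real.rpow_nonneg (jb_pos n₁).le _)
          exact Real.rpow_le_rpow (jb_pos n₁).le hj12 (by norm_num)
      _ = ((3:ℝ) ^ (2 * s₁ + 2) * 4) * jb n₁ ^ (2 * s₁) * jb n₂ ^ (2:ℝ) := by
          rw [Real.mul_rpow (by norm_num) (jb_pos n₂).le]
          rw [show ((2:ℝ) ^ (2:ℝ)) = 4 by
            rw [show ((2:ℝ):ℝ) = ((2:ℕ):ℝ) by norm_num, Real.rpow_natCast]; norm_num]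
          ring
  have key := mul_le_mul_of_nonneg_right hA
    (mul_nonneg (Real.rpow_nonneg (jb_pos n).le (-(2 * s₁ + 2 - 2 * s)))
      (Real.rpow_nonneg (jb_pos n₂).le (-2 : ℝ)))
  calc jb n ^ (2 * s) * jb n₂ ^ (-2 : ℝ)
      = jb n ^ (2 * s₁ + 2) * (jb n ^ (-(2 * s₁ + 2 - 2 * s)) * jb n₂ ^ (-2 : ℝ)) := by
        rw [← mul_assoc, ← Real.rpow_add (jb_pos n)]
        congr 2
        ring
    _ ≤ ((3:ℝ) ^ (2 * s₁ + 2) * 4) * jb n₁ ^ (2 * s₁) * jb n₂ ^ (2:ℝ) *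
          (jb n ^ (-(2 * s₁ + 2 - 2 * s)) * jb n₂ ^ (-2 : ℝ)) := key
    _ = ((3:ℝ) ^ (2 * s₁ + 2) * 4) * jb n ^ (-(2 * s₁ + 2 - 2 * s)) * jb n₁ ^ (2 * s₁) *
          (jb n₂ ^ (2:ℝ) * jb n₂ ^ (-2 : ℝ)) := by ring
    _ = ((3:ℝ) ^ (2 * s₁ + 2) * 4) * jb n ^ (-(2 * s₁ + 2 - 2 * s)) * jb n₁ ^ (2 * s₁) := by
        rw [← Real.rpow_add (jb_pos n₂)]
        norm_num

theorem resonant_product_weighted_sum_bound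
    (s₁ s : ℝ) (hs₁ : 0 < s₁) (hs : s < s₁ - 1 / 2) :
    ∃ C : ℝ, 0 < C ∧ ∀ a : (Fin 3 → ℤ) → ℝ, (∀ m, 0 ≤ a m) →
      ∑' n : Fin 3 → ℤ,
        ∑' n₁ : {m : Fin 3 → ℤ //
            enorm' (n - m) ≤ 2 * enorm' m ∧ enorm' m ≤ 2 * enorm' (n - m)},
          ENNReal.ofReal
            (jb n ^ (2 * s) * a (n₁ : Fin 3 → ℤ) *
              jb (n - (n₁ : Fin 3 → ℤ)) ^ (-2 : ℝ))
        ≤ ENNReal.ofReal C *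
            ∑' m : Fin 3 → ℤ, ENNReal.ofReal (jb m ^ (2 * s₁) * a m) := by
  set p : ℝ := 2 * s₁ + 2 - 2 * s with hp
  have hp3 : 3 < p := by rw [hp]; linarith
  set K : ℝ := (3:ℝ) ^ (2 * s₁ + 2) * 4 with hKdef
  have hK0 : 0 < K := mul_pos (Real.rpow_pos_of_pos (by norm_num) _) (by norm_num)
  set S : ENNReal := ∑' n : Fin 3 → ℤ, ENNReal.ofReal (jb n ^ (-p)) with hSdef
  have hS : S < ⊤ := S_finite hp3
  have hKS : ENNReal.ofReal K * S ≠ ⊤ := (ENNReal.mul_lt_top ENNReal.ofReal_lt_top hS).ne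
  refine ⟨(ENNReal.ofReal K * S).toReal + 1, by positivity, ?_⟩
  intro a ha
  set R : ENNReal := ∑' m : Fin 3 → ℤ, ENNReal.ofReal (jb m ^ (2 * s₁) * a m) with hR
  have step1 : ∀ n : Fin 3 → ℤ,
      (∑' n₁ : {m : Fin 3 → ℤ //
          enorm' (n - m) ≤ 2 * enorm' m ∧ enorm' m ≤ 2 * enorm' (n - m)},
        ENNReal.ofReal
          (jb n ^ (2 * s) * a (n₁ : Fin 3 → ℤ) *
            jb (n - (n₁ : Fin 3 → ℤ)) ^ (-2 : ℝ)))
      ≤ (ENNReal.ofReal K * ENNReal.ofReal (jb n ^ (-p))) * R := by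
    intro n
    have term : ∀ n₁ : {m : Fin 3 → ℤ //
        enorm' (n - m) ≤ 2 * enorm' m ∧ enorm' m ≤ 2 * enorm' (n - m)},
        ENNReal.ofReal
          (jb n ^ (2 * s) * a (n₁ : Fin 3 → ℤ) *
            jb (n - (n₁ : Fin 3 → ℤ)) ^ (-2 : ℝ))
        ≤ (ENNReal.ofReal K * ENNReal.ofReal (jb n ^ (-p))) *
            ENNReal.ofReal (jb (n₁ : Fin 3 → ℤ) ^ (2 * s₁) * a (n₁ : Fin 3 → ℤ)) := by
      intro n₁
      have hb := pointwise_bound hs₁ hs n₁.2.1 n₁.2.2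
      have hreal : jb n ^ (2 * s) * a (n₁ : Fin 3 → ℤ) *
          jb (n - (n₁ : Fin 3 → ℤ)) ^ (-2 : ℝ)
          ≤ K * jb n ^ (-p) * (jb (n₁ : Fin 3 → ℤ) ^ (2 * s₁) * a (n₁ : Fin 3 → ℤ)) := by
        have h2 := mul_le_mul_of_nonneg_right hb (ha (n₁ : Fin 3 → ℤ))
        calc jb n ^ (2 * s) * a (n₁ : Fin 3 → ℤ) * jb (n - (n₁ : Fin 3 → ℤ)) ^ (-2 : ℝ)
            = jb n ^ (2 * s) * jb (n - (n₁ : Fin 3 → ℤ)) ^ (-2 : ℝ) * a (n₁ : Fin 3 → ℤ) := by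
              ring
          _ ≤ K * jb n ^ (-(2 * s₁ + 2 - 2 * s)) * jb (n₁ : Fin 3 → ℤ) ^ (2 * s₁) *
                a (n₁ : Fin 3 → ℤ) := h2
          _ = K * jb n ^ (-p) * (jb (n₁ : Fin 3 → ℤ) ^ (2 * s₁) * a (n₁ : Fin 3 → ℤ)) := by
              rw [hp]; ring
      calc ENNReal.ofReal (jb n ^ (2 * s) * a (n₁ : Fin 3 → ℤ) *
              jb (n - (n₁ : Fin 3 → ℤ)) ^ (-2 : ℝ))
          ≤ ENNReal.ofReal (K * jb n ^ (-p) *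
              (jb (n₁ : Fin 3 → ℤ) ^ (2 * s₁) * a (n₁ : Fin 3 → ℤ))) :=
            ENNReal.ofReal_le_ofReal hreal
        _ = (ENNReal.ofReal K * ENNReal.ofReal (jb n ^ (-p))) *
              ENNReal.ofReal (jb (n₁ : Fin 3 → ℤ) ^ (2 * s₁) * a (n₁ : Fin 3 → ℤ)) := by
            rw [ENNReal.ofReal_mul (mul_nonneg hK0.le (Real.rpow_nonneg (jb_pos n).le _)),
              ENNReal.ofReal_mul hK0.le]
    calc (∑' n₁ : {m : Fin 3 → ℤ //
          enorm' (n - m) ≤ 2 * enorm' m ∧ enorm' m ≤ 2 * enorm' (n - m)},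
        ENNReal.ofReal
          (jb n ^ (2 * s) * a (n₁ : Fin 3 → ℤ) *
            jb (n - (n₁ : Fin 3 → ℤ)) ^ (-2 : ℝ)))
        ≤ ∑' n₁ : {m : Fin 3 → ℤ //
            enorm' (n - m) ≤ 2 * enorm' m ∧ enorm' m ≤ 2 * enorm' (n - m)},
          (ENNReal.ofReal K * ENNReal.ofReal (jb n ^ (-p))) *
            ENNReal.ofReal (jb (n₁ : Fin 3 → ℤ) ^ (2 * s₁) * a (n₁ : Fin 3 → ℤ)) :=
          ENNReal.tsum_le_tsum term
      _ = (ENNReal.ofReal K * ENNReal.ofReal (jb n ^ (-p))) *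
            ∑' n₁ : {m : Fin 3 → ℤ //
              enorm' (n - m) ≤ 2 * enorm' m ∧ enorm' m ≤ 2 * enorm' (n - m)},
            ENNReal.ofReal (jb (n₁ : Fin 3 → ℤ) ^ (2 * s₁) * a (n₁ : Fin 3 → ℤ)) :=
          ENNReal.tsum_mul_left
      _ ≤ (ENNReal.ofReal K * ENNReal.ofReal (jb n ^ (-p))) * R := by
          apply mul_le_mul_right
          exact ENNReal.tsum_comp_le_tsum_of_injective Subtype.val_injective
            (fun m => ENNReal.ofReal (jb m ^ (2 * s₁) * a m))
  calc (∑' n : Fin 3 → ℤ, ∑' n₁ : {m : Fin 3 → ℤ //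
          enorm' (n - m) ≤ 2 * enorm' m ∧ enorm' m ≤ 2 * enorm' (n - m)},
        ENNReal.ofReal
          (jb n ^ (2 * s) * a (n₁ : Fin 3 → ℤ) *
            jb (n - (n₁ : Fin 3 → ℤ)) ^ (-2 : ℝ)))
      ≤ ∑' n : Fin 3 → ℤ, (ENNReal.ofReal K * ENNReal.ofReal (jb n ^ (-p))) * R :=
        ENNReal.tsum_le_tsum step1
    _ = (ENNReal.ofReal K * R) * S := by
        rw [tsum_congr (fun n : Fin 3 → ℤ => show
          (ENNReal.ofReal K * ENNReal.ofReal (jb n ^ (-p))) * R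
            = (ENNReal.ofReal K * R) * ENNReal.ofReal (jb n ^ (-p)) by ring)]
        rw [ENNReal.tsum_mul_left]
    _ = (ENNReal.ofReal K * S) * R := by ring
    _ ≤ ENNReal.ofReal ((ENNReal.ofReal K * S).toReal + 1) * R := by
        apply mul_le_mul_left
        conv_lhs => rw [← ENNReal.ofReal_toReal hKS]
        exact ENNReal.ofReal_le_ofReal (by linarith)
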